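/- Let s ∈ ℂ with Re(s) > 0. Then: (i) for every m ≥ 1 the series T_m(s) = ∑ μ⋆(n, s), summed over all integers n ≥ 2 whose greatest prime factor equals the m-th prime p_m, converges absolutely; and (ii) 1 + ∑_{m=1}^{∞} T_m(s) = 0, where the outer sum is the limit of the partial sums ∑_{m=1}^{M} T_m(s) as M → ∞. Equivalently, the sum of the generalized Möbius function over all positive integers, taken in Greatest Prime Order, vanishes: ∑_{n ∈ ℕ, (GPO)} μ⋆(n, s) = 0. -/

import Mathlib

/-- The generalized Möbius function
`μ⋆(n, s) = (−1)^{ω(n)} · (∏_{p ∈ P(n)} (p^{s·π(p)} − 1)^{1/π(p)}) / n^s`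
(all complex powers principal); for `n = 1` the empty product gives `μ⋆(1, s) = 1`. -/
noncomputable def muStar (n : ℕ) (s : ℂ) : ℂ :=
  (-1 : ℂ) ^ n.primeFactors.card *
    (∏ p ∈ n.primeFactors,
      ((p : ℂ) ^ (s * (Nat.primeCounting p : ℂ)) - 1) ^ ((Nat.primeCounting p : ℂ))⁻¹) /
    (n : ℂ) ^ s

open Complex Nat

noncomputable def Wp (s : ℂ) (p : ℕ) : ℂ :=
  ((p : ℂ) ^ (s * (Nat.primeCounting p : ℂ)) - 1) ^ ((Nat.primeCounting p : ℂ))⁻¹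

lemma muStar_one (s : ℂ) : muStar 1 s = 1 := by simp [muStar]

lemma natCast_mul_cpow (m n : ℕ) (s : ℂ) :
    ((m * n : ℕ) : ℂ) ^ s = ((m : ℕ) : ℂ) ^ s * ((n : ℕ) : ℂ) ^ s := by
  simpa only [Nat.cast_mul, ofReal_natCast]
    using mul_cpow_ofReal_nonneg m.cast_nonneg n.cast_nonneg s

lemma muStar_mul (s : ℂ) {m n : ℕ} (h : Nat.Coprime m n) :
    muStar (m * n) s = muStar m s * muStar n s := by
  rcases eq_or_ne m 0 with rfl | hm
  · obtain rfl : n = 1 := (Nat.coprime_zero_left n).mp h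
    simp [muStar_one]
  rcases eq_or_ne n 0 with rfl | hn
  · obtain rfl : m = 1 := (Nat.coprime_zero_right m).mp h
    simp [muStar_one]
  have hd : Disjoint m.primeFactors n.primeFactors := Nat.Coprime.disjoint_primeFactors h
  unfold muStar
  rw [Nat.primeFactors_mul hm hn, Finset.card_union_of_disjoint hd, Finset.prod_union hd,
    natCast_mul_cpow, pow_add]
  ring

lemma natCast_pow_cpow (p k : ℕ) (s : ℂ) :
    ((p ^ k : ℕ) : ℂ) ^ s = (((p : ℕ) : ℂ) ^ s) ^ k := by
  induction k with
  | zero => simp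
  | succ k ih => rw [pow_succ, natCast_mul_cpow, ih, ← pow_succ]

lemma muStar_prime_pow (s : ℂ) {p k : ℕ} (hp : p.Prime) (hk : k ≠ 0) :
    muStar (p ^ k) s = -Wp s p * ((((p : ℕ) : ℂ) ^ s)⁻¹) ^ k := by
  unfold muStar Wp
  rw [Nat.primeFactors_prime_pow hk hp, Finset.card_singleton, Finset.prod_singleton, pow_one,
    natCast_pow_cpow, inv_pow, div_eq_mul_inv]
  ring

lemma norm_inv_cpow_lt_one {s : ℂ} (hs : 0 < s.re) {p : ℕ} (hp : p.Prime) :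
    ‖((((p : ℕ) : ℂ)) ^ s)⁻¹‖ < 1 := by
  rw [norm_inv, Complex.norm_natCast_cpow_of_pos hp.pos]
  have h1 : (1 : ℝ) < (p : ℝ) := by exact_mod_cast hp.one_lt
  have : (1 : ℝ) < (p : ℝ) ^ s.re :=
    (Real.one_lt_rpow_iff_of_pos (by linarith)).mpr (Or.inl ⟨h1, hs⟩)
  exact inv_lt_one_of_one_lt₀ this

lemma summable_norm_muStar_pow {s : ℂ} (hs : 0 < s.re) {p : ℕ} (hp : p.Prime) :
    Summable fun k : ℕ ↦ ‖muStar (p ^ k) s‖ := by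
  set r : ℝ := ‖((((p : ℕ) : ℂ)) ^ s)⁻¹‖ with hr
  have hr1 : r < 1 := norm_inv_cpow_lt_one hs hp
  set C : ℝ := max ‖Wp s p‖ 1 with hC
  refine Summable.of_nonneg_of_le (fun _ ↦ norm_nonneg _) (fun k ↦ ?_)
    ((summable_geometric_of_lt_one (norm_nonneg _) hr1).mul_left C)
  rcases eq_or_ne k 0 with rfl | hk
  · simp only [pow_zero, muStar_one, norm_one, mul_one]
    exact le_max_right _ _
  · rw [muStar_prime_pow s hp hk, norm_mul, norm_neg, norm_pow]
    exact mul_le_mul_of_nonneg_right (le_max_left _ _) (pow_nonneg (norm_nonneg _) k)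

lemma primeCounting_two : Nat.primeCounting 2 = 1 := by decide

lemma tsum_muStar_two {s : ℂ} (hs : 0 < s.re) : ∑' k : ℕ, muStar (2 ^ k) s = 0 := by
  have hnorm : (1 : ℝ) < ‖((2 : ℕ) : ℂ) ^ s‖ := by
    rw [Complex.norm_natCast_cpow_of_pos (by norm_num : 0 < 2)]
    have : (1 : ℝ) < (2 : ℝ) := one_lt_two
    exact (Real.one_lt_rpow_iff_of_pos (by norm_num)).mpr
      (Or.inl ⟨by exact_mod_cast this, hs⟩)
  set x : ℂ := ((2 : ℕ) : ℂ) ^ s with hxdef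
  have hx0 : x ≠ 0 := by
    intro h; rw [h] at hnorm; norm_num at hnorm
  have hx1 : x - 1 ≠ 0 := by
    intro h
    have : x = 1 := by linear_combination h
    rw [this] at hnorm; simp at hnorm
  have hW2 : Wp s 2 = x - 1 := by
    rw [Wp, primeCounting_two, Nat.cast_one, mul_one, inv_one, cpow_one]
  have hsum : Summable fun k : ℕ ↦ muStar (2 ^ k) s :=
    (summable_norm_muStar_pow hs Nat.prime_two).of_norm
  have hrn : ‖x⁻¹‖ < 1 := norm_inv_cpow_lt_one hs Nat.prime_two
  rw [Summable.tsum_eq_zero_add hsum]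
  have hterm : ∀ k : ℕ, muStar (2 ^ (k + 1)) s = (-Wp s 2 * x⁻¹) * (x⁻¹) ^ k := by
    intro k
    rw [muStar_prime_pow s Nat.prime_two (Nat.succ_ne_zero k), ← hxdef, _root_.pow_succ']
    ring
  rw [tsum_congr hterm, tsum_mul_left, tsum_geometric_of_norm_lt_one hrn, pow_zero, muStar_one,
    hW2]
  have hinv : (1 - x⁻¹)⁻¹ = x * (x - 1)⁻¹ := by
    rw [← inv_inv x, ← mul_inv]
    congr 1
    field_simp
  rw [hinv]
  field_simp
  ring

/-- The Greatest Prime Order class of index `m ≥ 1`: the set of integers `n ≥ 2` whose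
greatest prime factor is the `m`-th prime `p_m = Nat.nth Nat.Prime (m-1)` (`p_1 = 2`). -/
def GPOClass (m : ℕ) : Set ℕ :=
  {n | 2 ≤ n ∧ n.primeFactors.max = ((Nat.nth Nat.Prime (m - 1) : ℕ) : WithBot ℕ)}

set_option maxHeartbeats 1000000 in
lemma euler_muStar {s : ℂ} (hs : 0 < s.re) (N : ℕ) :
    Summable (fun n : N.smoothNumbers ↦ ‖muStar (n : ℕ) s‖) ∧
      HasSum (fun n : N.smoothNumbers ↦ muStar (n : ℕ) s)
        (∏ p ∈ N.primesBelow, ∑' k : ℕ, muStar (p ^ k) s) :=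
  EulerProduct.summable_and_hasSum_smoothNumbers_prod_primesBelow_tsum
    (f := fun n ↦ muStar n s) (muStar_one s) (fun {m n} h ↦ muStar_mul s h)
    (fun {p} hp ↦ summable_norm_muStar_pow hs hp) N

lemma summable_norm_subset {s : ℂ} {A B : Set ℕ} (hAB : A ⊆ B)
    (hB : Summable fun n : B ↦ ‖muStar (n : ℕ) s‖) :
    Summable fun n : A ↦ ‖muStar (n : ℕ) s‖ := by
  set g : ℕ → ℝ := fun n ↦ ‖muStar n s‖ with hg
  have hBi : Summable (B.indicator g) :=
    (summable_subtype_iff_indicator (f := g) (s := B)).mp hB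
  have hAi : Summable (A.indicator g) :=
    hBi.of_nonneg_of_le
      (fun n ↦ Set.indicator_nonneg (fun _ _ ↦ norm_nonneg _) n)
      (fun n ↦ Set.indicator_le_indicator_of_subset hAB (fun _ ↦ norm_nonneg _) n)
  exact (summable_subtype_iff_indicator (f := g) (s := A)).mpr hAi

lemma GPOClass_subset_smooth {m M : ℕ} (hmM : m ≤ M) :
    GPOClass m ⊆ Nat.smoothNumbers (Nat.nth Nat.Prime (M - 1) + 1) := by
  rintro n ⟨hn2, hmax⟩
  rw [Nat.mem_smoothNumbers']
  intro p pp hpn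
  have hpmem : p ∈ n.primeFactors := Nat.mem_primeFactors.mpr ⟨pp, hpn, by omega⟩
  have hle : (p : WithBot ℕ) ≤ ((Nat.nth Nat.Prime (m - 1) : ℕ) : WithBot ℕ) :=
    hmax ▸ Finset.le_max hpmem
  have h1 : p ≤ Nat.nth Nat.Prime (m - 1) := by exact_mod_cast hle
  have h2 : Nat.nth Nat.Prime (m - 1) ≤ Nat.nth Nat.Prime (M - 1) :=
    Nat.nth_monotone Nat.infinite_setOf_prime (by omega)
  omega

lemma smooth_eq_union (M : ℕ) (hM : 1 ≤ M) :
    Nat.smoothNumbers (Nat.nth Nat.Prime (M - 1) + 1) =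
      {1} ∪ ⋃ m ∈ Finset.Icc 1 M, GPOClass m := by
  ext n
  constructor
  · intro hn
    rw [Nat.mem_smoothNumbers'] at hn
    rcases eq_or_ne n 1 with rfl | hn1
    · exact Or.inl rfl
    have hn0 : n ≠ 0 := by
      intro h
      obtain ⟨P, hPN, hPp⟩ :=
        Nat.exists_infinite_primes (Nat.nth Nat.Prime (M - 1) + 1)
      exact absurd (hn P hPp (h ▸ dvd_zero P)) (by omega)
    have hne : n.primeFactors.Nonempty :=
      Nat.nonempty_primeFactors.mpr (by omega)
    set q := n.primeFactors.max' hne with hq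
    have hqmem : q ∈ n.primeFactors := Finset.max'_mem _ hne
    have hqp : q.Prime := Nat.prime_of_mem_primeFactors hqmem
    have hmax : n.primeFactors.max = (q : WithBot ℕ) := (Finset.coe_max' hne).symm
    refine Or.inr ?_
    simp only [Set.mem_iUnion]
    refine ⟨Nat.count Nat.Prime q + 1, ?_, ?_⟩
    · have hqlt : q < Nat.nth Nat.Prime (M - 1) + 1 :=
        hn q hqp (Nat.dvd_of_mem_primeFactors hqmem)
      have := Nat.count_monotone Nat.Prime (Nat.le_of_lt_succ hqlt)
      rw [Nat.count_nth_of_infinite Nat.infinite_setOf_prime] at this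
      rw [Finset.mem_Icc]
      omega
    · refine ⟨by omega, ?_⟩
      rw [hmax, Nat.add_sub_cancel, Nat.nth_count hqp]
  · rintro (rfl | hn)
    · rw [Nat.mem_smoothNumbers']
      intro p pp hp
      have := Nat.le_of_dvd one_pos hp
      have := pp.two_le
      omega
    · simp only [Set.mem_iUnion] at hn
      obtain ⟨m, hm, hnm⟩ := hn
      rw [Finset.mem_Icc] at hm
      exact GPOClass_subset_smooth hm.2 hnm

set_option maxHeartbeats 2000000 in
/-- for `Re s > 0`, (i) for every `m ≥ 1` the series
`T_m(s) = ∑_{n ≥ 2, greatest prime factor of n = p_m} μ⋆(n, s)` converges absolutely, and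
(ii) `1 + ∑_{m=1}^∞ T_m(s) = 0`, the outer sum being the limit of its partial sums:
the sum of `μ⋆(·, s)` over ℕ in Greatest Prime Order vanishes. -/
theorem stmt_12 (s : ℂ) (hs : 0 < s.re) :
    (∀ m : ℕ, 1 ≤ m → Summable (fun n : GPOClass m => ‖muStar (n : ℕ) s‖)) ∧
    Filter.Tendsto
      (fun M : ℕ => 1 + ∑ m ∈ Finset.Icc 1 M, ∑' n : GPOClass m, muStar (n : ℕ) s)
      Filter.atTop (nhds 0) := by
  constructor
  · intro m _
    have h := summable_norm_subset (GPOClass_subset_smooth (le_refl m))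
      (euler_muStar hs (Nat.nth Nat.Prime (m - 1) + 1)).1
    exact h
  · have key : ∀ M : ℕ, 1 ≤ M →
        1 + ∑ m ∈ Finset.Icc 1 M, ∑' n : GPOClass m, muStar (n : ℕ) s = 0 := by
      intro M hM
      set N := Nat.nth Nat.Prime (M - 1) + 1 with hN
      have hE := euler_muStar hs N
      have h2mem : 2 ∈ N.primesBelow := by
        rw [Nat.mem_primesBelow]
        exact ⟨by have := Nat.add_two_le_nth_prime (M - 1); omega, Nat.prime_two⟩
      have htsum0 : ∑' n : N.smoothNumbers, muStar (n : ℕ) s = 0 := by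
        rw [hE.2.tsum_eq]
        exact Finset.prod_eq_zero h2mem (tsum_muStar_two hs)
      have hset := smooth_eq_union M hM
      have hU : (⋃ m ∈ Finset.Icc 1 M, GPOClass m) ⊆ N.smoothNumbers := by
        rw [hset]; exact Set.subset_union_right
      have hsum1 : Summable fun n : ({1} : Set ℕ) ↦ muStar (n : ℕ) s :=
        Set.Finite.summable (Set.finite_singleton 1) (fun n ↦ muStar n s)
      have hsumU : Summable fun n : ↑(⋃ m ∈ Finset.Icc 1 M, GPOClass m) ↦ muStar (n : ℕ) s :=
        (summable_norm_subset hU hE.1).of_norm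
      have hdisj : Disjoint ({1} : Set ℕ) (⋃ m ∈ Finset.Icc 1 M, GPOClass m) := by
        rw [Set.disjoint_left]
        rintro a rfl ha
        simp only [Set.mem_iUnion] at ha
        obtain ⟨m, _, h2, _⟩ := ha
        omega
      have hpair : (↑(Finset.Icc 1 M) : Set ℕ).Pairwise (Function.onFun Disjoint GPOClass) := by
        intro a ha b hb hab
        simp only [Finset.coe_Icc, Set.mem_Icc] at ha hb
        rw [Function.onFun_apply, Set.disjoint_left]
        rintro n ⟨_, hna⟩ ⟨_, hnb⟩
        rw [hna] at hnb
        have : Nat.nth Nat.Prime (a - 1) = Nat.nth Nat.Prime (b - 1) := by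
          exact_mod_cast hnb
        have := Nat.nth_injective Nat.infinite_setOf_prime this
        omega
      have hsumi : ∀ m ∈ Finset.Icc 1 M,
          Summable fun n : GPOClass m ↦ muStar (n : ℕ) s := fun m hm' ↦
        (summable_norm_subset (GPOClass_subset_smooth (Finset.mem_Icc.mp hm').2) hE.1).of_norm
      have hstep : ∑' n : N.smoothNumbers, muStar (n : ℕ) s =
          ∑' n : ↑(({1} : Set ℕ) ∪ ⋃ m ∈ Finset.Icc 1 M, GPOClass m), muStar (n : ℕ) s := by
        rw [hset]
      rw [hstep, Summable.tsum_union_disjoint (f := fun n ↦ muStar n s) hdisj hsum1 hsumU,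
        tsum_singleton 1 (fun n ↦ muStar n s), muStar_one,
        Summable.tsum_finset_bUnion_disjoint (f := fun n ↦ muStar n s) hpair hsumi] at htsum0
      exact htsum0
    have heq : (fun _ : ℕ ↦ (0 : ℂ)) =ᶠ[Filter.atTop]
        (fun M : ℕ ↦ 1 + ∑ m ∈ Finset.Icc 1 M, ∑' n : GPOClass m, muStar (n : ℕ) s) :=
      Filter.eventually_atTop.mpr ⟨1, fun M hM ↦ (key M hM).symm⟩
    exact Filter.Tendsto.congr' heq tendsto_const_nhds
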